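/- Let E, F be Banach spaces, L : F → E a bounded linear map, and f : B_E × B_F → F a map satisfying ‖f(x,y)‖ ≤ C‖y‖² for all x in the unit ball B_E. Define the iteration (x_{n+1}, y_{n+1}) = (xₙ + L yₙ, f(xₙ, yₙ)) with x₀ = 0 and y₀ ∈ B_F such that ρ := C‖y₀‖ < 1 and (‖L‖/C)·Σ_{n≥0} ρ^{2^n} < 1. Then ‖yₙ‖ ≤ (1/C)ρ^{2^n} and ‖xₙ‖ ≤ (‖L‖/C)·Σ_{i=0}^{n-1} ρ^{2^i}; in particular (xₙ, yₙ) converges to a limit of the form (ℓ, 0). -/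

import Mathlib

theorem stmt_18 {E F : Type*} [NormedAddCommGroup E] [NormedSpace ℝ E] [CompleteSpace E]
    [NormedAddCommGroup F] [NormedSpace ℝ F] [CompleteSpace F]
    (L : F →L[ℝ] E) (f : E × F → F) (C : ℝ) (hC : 0 < C)
    (hf : ∀ (x : E) (y : F), ‖x‖ ≤ 1 → ‖y‖ ≤ 1 → ‖f (x, y)‖ ≤ C * ‖y‖ ^ 2)
    (y₀ : F) (hy₀ : ‖y₀‖ ≤ 1) (hρ : C * ‖y₀‖ < 1)
    (hL : ‖L‖ / C * ∑' n : ℕ, (C * ‖y₀‖) ^ 2 ^ n < 1) :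
    let step : E × F → E × F := fun p => (p.1 + L p.2, f p)
    (∀ n : ℕ, ‖(step^[n] (0, y₀)).2‖ ≤ (1 / C) * (C * ‖y₀‖) ^ 2 ^ n) ∧
    (∀ n : ℕ, ‖(step^[n] (0, y₀)).1‖ ≤ ‖L‖ / C * ∑ i ∈ Finset.range n, (C * ‖y₀‖) ^ 2 ^ i) ∧
    ∃ l : E, Filter.Tendsto (fun n => step^[n] (0, y₀)) Filter.atTop (nhds (l, 0)) := by
  intro step
  set ρ := C * ‖y₀‖ with hρdef
  have hρ0 : 0 ≤ ρ := mul_nonneg hC.le (norm_nonneg _)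
  have hsum : Summable (fun n : ℕ => ρ ^ 2 ^ n) := by
    refine Summable.of_nonneg_of_le (fun n => pow_nonneg hρ0 _) (fun n => ?_)
      (summable_geometric_of_lt_one hρ0 hρ)
    exact pow_le_pow_of_le_one hρ0 hρ.le (Nat.lt_two_pow_self (n := n)).le
  have hLC : 0 ≤ ‖L‖ / C := div_nonneg (norm_nonneg _) hC.le
  have key : ∀ n : ℕ, ‖(step^[n] (0, y₀)).2‖ ≤ (1 / C) * ρ ^ 2 ^ n ∧
      ‖(step^[n] (0, y₀)).1‖ ≤ ‖L‖ / C * ∑ i ∈ Finset.range n, ρ ^ 2 ^ i := by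
    intro n
    induction n with
    | zero =>
      constructor
      · simp only [Function.iterate_zero, id_eq]
        have : (1 / C) * ρ ^ 2 ^ 0 = ‖y₀‖ := by
          rw [hρdef]; field_simp; simp
        rw [this]
      · simp
    | succ n ih =>
      have hx1 : ‖(step^[n] (0, y₀)).1‖ ≤ 1 := by
        refine le_trans ih.2 (le_of_lt (lt_of_le_of_lt ?_ hL))
        exact mul_le_mul_of_nonneg_left
          (Summable.sum_le_tsum _ (fun i _ => pow_nonneg hρ0 _) hsum) hLC
      have hy1 : ‖(step^[n] (0, y₀)).2‖ ≤ 1 := by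
        refine le_trans ih.1 (le_trans ?_ hy₀)
        have h1 : ρ ^ 2 ^ n ≤ ρ ^ 1 :=
          pow_le_pow_of_le_one hρ0 hρ.le (Nat.one_le_two_pow)
        calc (1 / C) * ρ ^ 2 ^ n ≤ (1 / C) * ρ ^ 1 := by
              exact mul_le_mul_of_nonneg_left h1 (by positivity)
          _ = ‖y₀‖ := by rw [hρdef]; field_simp
      rw [Function.iterate_succ_apply']
      constructor
      · show ‖f (step^[n] (0, y₀))‖ ≤ _
        have := hf _ _ hx1 hy1
        rw [← Prod.mk.eta (p := step^[n] (0, y₀))] at this ⊢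
        refine le_trans (hf _ _ hx1 hy1) ?_
        have h2 : ‖(step^[n] (0, y₀)).2‖ ^ 2 ≤ ((1 / C) * ρ ^ 2 ^ n) ^ 2 :=
          pow_le_pow_left₀ (norm_nonneg _) ih.1 2
        calc C * ‖(step^[n] (0, y₀)).2‖ ^ 2 ≤ C * ((1 / C) * ρ ^ 2 ^ n) ^ 2 :=
              mul_le_mul_of_nonneg_left h2 hC.le
          _ = (1 / C) * ρ ^ 2 ^ (n + 1) := by
              rw [show (2:ℕ) ^ (n + 1) = 2 ^ n * 2 by ring, pow_mul]
              field_simp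
      · show ‖(step^[n] (0, y₀)).1 + L (step^[n] (0, y₀)).2‖ ≤ _
        refine le_trans (norm_add_le _ _) ?_
        have hLy : ‖L (step^[n] (0, y₀)).2‖ ≤ ‖L‖ / C * ρ ^ 2 ^ n := by
          calc ‖L (step^[n] (0, y₀)).2‖ ≤ ‖L‖ * ‖(step^[n] (0, y₀)).2‖ := L.le_opNorm _
            _ ≤ ‖L‖ * ((1 / C) * ρ ^ 2 ^ n) :=
              mul_le_mul_of_nonneg_left ih.1 (norm_nonneg _)
            _ = ‖L‖ / C * ρ ^ 2 ^ n := by ring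
        rw [Finset.sum_range_succ, mul_add]
        exact add_le_add ih.2 hLy
  refine ⟨fun n => (key n).1, fun n => (key n).2, ?_⟩
  -- convergence
  have hy0 : Filter.Tendsto (fun n => (step^[n] (0, y₀)).2) Filter.atTop (nhds 0) := by
    refine squeeze_zero_norm (fun n => (key n).1) ?_
    have := hsum.tendsto_atTop_zero
    have h := this.const_mul (1 / C)
    simpa using h
  have hxsum : ∀ n : ℕ, (step^[n] (0, y₀)).1
      = ∑ i ∈ Finset.range n, L ((step^[i] (0, y₀)).2) := by
    intro n
    induction n with
    | zero => simp
    | succ n ih =>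
      rw [Function.iterate_succ_apply', Finset.sum_range_succ, ← ih]
  have hsummable : Summable (fun i : ℕ => L ((step^[i] (0, y₀)).2)) := by
    refine Summable.of_norm (Summable.of_nonneg_of_le (fun i => norm_nonneg _)
      (fun i => ?_) ((hsum.mul_left (‖L‖ / C))))
    calc ‖L ((step^[i] (0, y₀)).2)‖ ≤ ‖L‖ * ‖(step^[i] (0, y₀)).2‖ := L.le_opNorm _
      _ ≤ ‖L‖ * ((1 / C) * ρ ^ 2 ^ i) :=
        mul_le_mul_of_nonneg_left (key i).1 (norm_nonneg _)
      _ = ‖L‖ / C * ρ ^ 2 ^ i := by ring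
  obtain ⟨l, hl⟩ := hsummable
  have hx : Filter.Tendsto (fun n => (step^[n] (0, y₀)).1) Filter.atTop (nhds l) := by
    have := hl.tendsto_sum_nat
    refine this.congr fun n => (hxsum n).symm
  refine ⟨l, ?_⟩
  have := hx.prodMk_nhds hy0
  simpa using this
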